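/- Let B be a complex Banach space, let L = [a₀, b₀] ⊂ ℝ be a compact interval of positive length |L| = b₀ − a₀ > 0 (regarded as a subset of ℂ), let d > 0, and set Ξ(L; d) := {z ∈ ℂ : dist(z, L) ≤ d} and ϱ := 2d/|L| + √(1 + 4d²/|L|²) (so ϱ > 1). Suppose v : ℂ → B is complex-analytic on an open set containing Ξ(L; d). Then for every natural number p there exist elements b₀, b₁, …, b_p ∈ B such that sup_{y ∈ L} ‖v(y) − ∑_{s=0}^{p} y^s · b_s‖ ≤ (2/(ϱ − 1)) · ϱ^{−p} · sup_{z ∈ Ξ(L; d)} ‖v(z)‖. -/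

import Mathlib

open Complex Metric Set Finset Polynomial

lemma geom_aux' (z ξ : ℂ) (hz : z ≠ 0) (hzξ : z - ξ ≠ 0) (q : ℕ) :
    (z - ξ)⁻¹ = (∑ k ∈ Finset.range q, ξ ^ k * z⁻¹ ^ (k+1)) + ξ ^ q * z⁻¹ ^ q * (z - ξ)⁻¹ := by
  induction q with
  | zero => simp
  | succ q ih =>
    have key : ξ ^ q * z⁻¹ ^ (q+1) + ξ ^ (q+1) * z⁻¹ ^ (q+1) * (z - ξ)⁻¹
        = ξ ^ q * z⁻¹ ^ q * (z - ξ)⁻¹ := by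
      field_simp
      ring_nf
      rw [mul_inv_cancel₀ hz, one_mul]
    rw [Finset.sum_range_succ, add_assoc, key]
    exact ih

lemma cint_add {B : Type*} [NormedAddCommGroup B] [NormedSpace ℂ B]
    {f g : ℂ → B} {c : ℂ} {R : ℝ} (hf : CircleIntegrable f c R)
    (hg : CircleIntegrable g c R) :
    (∮ z in C(c, R), (f z + g z)) = (∮ z in C(c, R), f z) + ∮ z in C(c, R), g z := by
  simp only [circleIntegral, smul_add, intervalIntegral.integral_add hf.out hg.out]

lemma cint_neg {B : Type*} [NormedAddCommGroup B] [NormedSpace ℂ B]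
    {f : ℂ → B} {c : ℂ} {R : ℝ} :
    (∮ z in C(c, R), -f z) = -∮ z in C(c, R), f z := by
  simp only [circleIntegral, smul_neg, intervalIntegral.integral_neg]

lemma cintegrable_sum {B : Type*} [NormedAddCommGroup B] [NormedSpace ℂ B] {ι : Type*}
    (s : Finset ι) {F : ι → ℂ → B} {c : ℂ} {R : ℝ}
    (h : ∀ i ∈ s, CircleIntegrable (F i) c R) :
    CircleIntegrable (fun z => ∑ i ∈ s, F i z) c R := by
  classical
  induction s using Finset.induction_on with
  | empty => simpa using circleIntegrable_const (0 : B) c R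
  | insert a s hx ih =>
    simp only [Finset.sum_insert hx]
    exact (h a (Finset.mem_insert_self a s)).add
      (ih fun i hi => h i (Finset.mem_insert_of_mem hi))

lemma cint_sum {B : Type*} [NormedAddCommGroup B] [NormedSpace ℂ B] {ι : Type*}
    (s : Finset ι) {F : ι → ℂ → B} {c : ℂ} {R : ℝ}
    (h : ∀ i ∈ s, CircleIntegrable (F i) c R) :
    (∮ z in C(c, R), (∑ i ∈ s, F i z)) = ∑ i ∈ s, ∮ z in C(c, R), F i z := by
  classical
  induction s using Finset.induction_on with
  | empty => simp [circleIntegral]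
  | insert a s hx ih =>
    simp only [Finset.sum_insert hx]
    rw [cint_add (h a (Finset.mem_insert_self a s))
      (cintegrable_sum s fun i hi => h i (Finset.mem_insert_of_mem hi)),
      ih fun i hi => h i (Finset.mem_insert_of_mem hi)]

lemma expand_outer {B : Type*} [NormedAddCommGroup B] [NormedSpace ℂ B]
    (f : ℂ → B) {R : ℝ} (hR : 0 < R) (hfc : ContinuousOn f (sphere (0:ℂ) R))
    {M : ℝ} (hM : ∀ z ∈ sphere (0:ℂ) R, ‖f z‖ ≤ M)
    {u : ℂ} (hu : ‖u‖ < R) (q : ℕ) :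
    ‖(∮ z in C((0:ℂ), R), (z - u)⁻¹ • f z)
        - ∑ k ∈ Finset.range q, u ^ k • (∮ z in C((0:ℂ), R), z⁻¹ ^ (k+1) • f z)‖
      ≤ 2 * Real.pi * R * ((‖u‖ / R) ^ q * (R - ‖u‖)⁻¹ * M) := by
  have hz0 : ∀ z ∈ sphere (0:ℂ) R, z ≠ 0 := fun z hz h => by
    rw [mem_sphere_iff_norm, sub_zero, h] at hz; simp at hz; linarith
  have hzu : ∀ z ∈ sphere (0:ℂ) R, z - u ≠ 0 := fun z hz h => by
    rw [mem_sphere_iff_norm, sub_zero] at hz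
    rw [sub_eq_zero] at h; rw [h] at hz
    linarith
  have hcinv : ContinuousOn (fun z => (z - u)⁻¹) (sphere (0:ℂ) R) :=
    ContinuousOn.inv₀ (by fun_prop) hzu
  have hint : CircleIntegrable (fun z => (z - u)⁻¹ • f z) 0 R :=
    ContinuousOn.circleIntegrable hR.le (hcinv.smul hfc)
  have hintk : ∀ k : ℕ, CircleIntegrable (fun z => (u ^ k * z⁻¹ ^ (k+1)) • f z) 0 R := by
    intro k
    refine ContinuousOn.circleIntegrable hR.le (ContinuousOn.smul ?_ hfc)
    exact (continuousOn_const.mul (((continuousOn_id.inv₀ hz0)).pow _))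
  have hintrem : CircleIntegrable (fun z => (u ^ q * z⁻¹ ^ q * (z - u)⁻¹) • f z) 0 R := by
    refine ContinuousOn.circleIntegrable hR.le (ContinuousOn.smul ?_ hfc)
    exact (continuousOn_const.mul (((continuousOn_id.inv₀ hz0)).pow _)).mul hcinv
  have congr1 : (∮ z in C((0:ℂ), R), (z - u)⁻¹ • f z)
      = ∮ z in C((0:ℂ), R), ((∑ k ∈ Finset.range q, (u ^ k * z⁻¹ ^ (k+1)) • f z)
          + (u ^ q * z⁻¹ ^ q * (z - u)⁻¹) • f z) := by
    refine circleIntegral.integral_congr hR.le (fun z hz => ?_)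
    conv_lhs => rw [geom_aux' z u (hz0 z hz) (hzu z hz) q]
    rw [add_smul, Finset.sum_smul]
  rw [congr1, cint_add (cintegrable_sum _ (fun i _ => hintk i)) hintrem,
    cint_sum _ (fun i _ => hintk i)]
  have hpull : ∀ k : ℕ, (∮ z in C((0:ℂ), R), (u ^ k * z⁻¹ ^ (k+1)) • f z)
      = u ^ k • (∮ z in C((0:ℂ), R), z⁻¹ ^ (k+1) • f z) := by
    intro k
    rw [← circleIntegral.integral_smul]
    exact circleIntegral.integral_congr hR.le (fun z _ => by rw [mul_smul])
  simp only [hpull]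
  rw [add_sub_cancel_left]
  refine circleIntegral.norm_integral_le_of_norm_le_const hR.le (fun z hz => ?_)
  · 
    rw [mem_sphere_iff_norm, sub_zero] at hz
    have hzR : ‖z‖ = R := by simpa using hz
    have hMz : 0 ≤ M := le_trans (norm_nonneg _) (hM z (by simp [mem_sphere_iff_norm, hz]))
    rw [norm_smul]
    have h1 : ‖u ^ q * z⁻¹ ^ q * (z - u)⁻¹‖ = (‖u‖ / R) ^ q * (‖z - u‖)⁻¹ := by
      simp [map_mul, map_pow, map_inv₀, hzR, div_pow, div_eq_mul_inv,
        mul_pow]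
    rw [h1]
    have h2 : R - ‖u‖ ≤ ‖z - u‖ := by
      have := norm_sub_norm_le z u
      simp only [hzR] at this
      linarith
    have h3 : (‖z - u‖)⁻¹ ≤ (R - ‖u‖)⁻¹ := by
      apply inv_anti₀ (by linarith) h2
    have h4 : ‖f z‖ ≤ M := hM z (by simp [mem_sphere_iff_norm, hz])
    have h5 : (0:ℝ) ≤ (‖u‖ / R) ^ q := by positivity
    calc (‖u‖ / R) ^ q * (‖z - u‖)⁻¹ * ‖f z‖
        ≤ (‖u‖ / R) ^ q * (R - ‖u‖)⁻¹ * M := by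
          apply mul_le_mul (mul_le_mul le_rfl h3 (inv_nonneg.mpr (norm_nonneg _)) h5)
            h4 (norm_nonneg _)
          exact mul_nonneg h5 (inv_nonneg.mpr (by linarith))

lemma expand_inner {B : Type*} [NormedAddCommGroup B] [NormedSpace ℂ B]
    (f : ℂ → B) {r : ℝ} (hr : 0 < r) (hfc : ContinuousOn f (sphere (0:ℂ) r))
    {M : ℝ} (hM : ∀ z ∈ sphere (0:ℂ) r, ‖f z‖ ≤ M)
    {u : ℂ} (hu : r < ‖u‖) (q : ℕ) :
    ‖(∮ z in C((0:ℂ), r), (z - u)⁻¹ • f z)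
        + ∑ k ∈ Finset.range q, (u⁻¹) ^ (k+1) • (∮ z in C((0:ℂ), r), z ^ k • f z)‖
      ≤ 2 * Real.pi * r * ((r / ‖u‖) ^ q * (‖u‖ - r)⁻¹ * M) := by
  have hu0 : u ≠ 0 := by
    intro h; rw [h] at hu; simp at hu; linarith
  have hzu : ∀ z ∈ sphere (0:ℂ) r, u - z ≠ 0 := fun z hz h => by
    rw [mem_sphere_iff_norm, sub_zero] at hz
    rw [sub_eq_zero] at h; rw [← h] at hz
    linarith
  have hcinv : ContinuousOn (fun z => (z - u)⁻¹) (sphere (0:ℂ) r) :=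
    ContinuousOn.inv₀ (by fun_prop) (fun z hz h => hzu z hz (by
      rw [sub_eq_zero] at h ⊢; exact h.symm))
  have hintk : ∀ k : ℕ, CircleIntegrable (fun z => (z ^ k * u⁻¹ ^ (k+1)) • f z) 0 r := by
    intro k
    refine ContinuousOn.circleIntegrable hr.le (ContinuousOn.smul (by fun_prop) hfc)
  have hintrem : CircleIntegrable (fun z => (z ^ q * u⁻¹ ^ q * (u - z)⁻¹) • f z) 0 r := by
    refine ContinuousOn.circleIntegrable hr.le (ContinuousOn.smul ?_ hfc)
    exact (ContinuousOn.mul (by fun_prop) (ContinuousOn.inv₀ (by fun_prop) hzu))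
  have congr1 : (∮ z in C((0:ℂ), r), (z - u)⁻¹ • f z)
      = ∮ z in C((0:ℂ), r), (-((∑ k ∈ Finset.range q, (z ^ k * u⁻¹ ^ (k+1)) • f z)
          + (z ^ q * u⁻¹ ^ q * (u - z)⁻¹) • f z)) := by
    refine circleIntegral.integral_congr hr.le (fun z hz => ?_)
    have h1 : (z - u)⁻¹ = -((u - z)⁻¹) := by
      rw [← neg_sub u z, inv_neg]
    conv_lhs => rw [h1, geom_aux' u z hu0 (hzu z hz) q]
    rw [neg_smul, add_smul, Finset.sum_smul]
  have hintsum : CircleIntegrable (fun z => ∑ k ∈ Finset.range q, (z ^ k * u⁻¹ ^ (k+1)) • f z) 0 r :=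
    cintegrable_sum _ (fun i _ => hintk i)
  have split : (∮ z in C((0:ℂ), r), (z - u)⁻¹ • f z)
      = -((∑ k ∈ Finset.range q, (u⁻¹) ^ (k+1) • (∮ z in C((0:ℂ), r), z ^ k • f z))
          + ∮ z in C((0:ℂ), r), (z ^ q * u⁻¹ ^ q * (u - z)⁻¹) • f z) := by
    rw [congr1]
    have hneg : (∮ z in C((0:ℂ), r), (-((∑ k ∈ Finset.range q, (z ^ k * u⁻¹ ^ (k+1)) • f z)
          + (z ^ q * u⁻¹ ^ q * (u - z)⁻¹) • f z)))
        = -(∮ z in C((0:ℂ), r), ((∑ k ∈ Finset.range q, (z ^ k * u⁻¹ ^ (k+1)) • f z)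
          + (z ^ q * u⁻¹ ^ q * (u - z)⁻¹) • f z)) := cint_neg
    rw [hneg, cint_add hintsum hintrem, cint_sum _ (fun i _ => hintk i)]
    congr 2
    refine Finset.sum_congr rfl (fun k _ => ?_)
    rw [← circleIntegral.integral_smul]
    refine circleIntegral.integral_congr hr.le (fun z _ => ?_)
    rw [smul_smul, mul_comm]
  rw [split]
  have : -((∑ k ∈ Finset.range q, (u⁻¹) ^ (k+1) • (∮ z in C((0:ℂ), r), z ^ k • f z))
          + ∮ z in C((0:ℂ), r), (z ^ q * u⁻¹ ^ q * (u - z)⁻¹) • f z)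
        + ∑ k ∈ Finset.range q, (u⁻¹) ^ (k+1) • (∮ z in C((0:ℂ), r), z ^ k • f z)
      = -(∮ z in C((0:ℂ), r), (z ^ q * u⁻¹ ^ q * (u - z)⁻¹) • f z) := by abel
  rw [this, norm_neg]
  refine circleIntegral.norm_integral_le_of_norm_le_const hr.le (fun z hz => ?_)
  rw [mem_sphere_iff_norm, sub_zero] at hz
  have hzr : ‖z‖ = r := by simpa using hz
  rw [norm_smul]
  have h1 : ‖z ^ q * u⁻¹ ^ q * (u - z)⁻¹‖ = (r / ‖u‖) ^ q * (‖u - z‖)⁻¹ := by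
    simp [map_mul, map_pow, map_inv₀, hzr, div_pow, div_eq_mul_inv, mul_pow]
  rw [h1]
  have h2 : ‖u‖ - r ≤ ‖u - z‖ := by
    have := norm_sub_norm_le u z
    simp only [hzr] at this
    linarith
  have h3 : (‖u - z‖)⁻¹ ≤ (‖u‖ - r)⁻¹ :=
    inv_anti₀ (by linarith) h2
  have h4 : ‖f z‖ ≤ M := hM z (by simp [mem_sphere_iff_norm, hz])
  have h5 : (0:ℝ) ≤ (r / ‖u‖) ^ q := by positivity
  calc (r / ‖u‖) ^ q * (‖u - z‖)⁻¹ * ‖f z‖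
      ≤ (r / ‖u‖) ^ q * (‖u‖ - r)⁻¹ * M := by
        apply mul_le_mul (mul_le_mul le_rfl h3 (inv_nonneg.mpr (norm_nonneg _)) h5)
          h4 (norm_nonneg _)
        exact mul_nonneg h5 (inv_nonneg.mpr (by linarith))

lemma quad0 (ε b e : ℝ) (hb2 : b^2 ≤ ε^2) (he2 : e^2 ≤ 1) : (b*e)^2 ≤ ε^2 := by
  nlinarith [sq_nonneg e, sq_nonneg b, mul_le_mul hb2 he2 (sq_nonneg e)
    (le_trans (sq_nonneg b) hb2)]

lemma quad1 (ε a b c e : ℝ) (hab : a^2 - b^2 = 1) (hcd : c^2 + e^2 = 1)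
    (hac : a - c ≤ ε) (hac0 : 0 ≤ a - c) :
    (a*c - 1)^2 + (b*e)^2 ≤ ε^2 := by
  have hiden : (a*c - 1)^2 + (b*e)^2 = (a-c)^2 := by
    have he : e^2 = 1 - c^2 := by linarith
    have hb : b^2 = a^2 - 1 := by linarith
    calc (a*c-1)^2 + (b*e)^2 = (a*c-1)^2 + b^2*e^2 := by ring
    _ = (a*c-1)^2 + (a^2-1)*(1-c^2) := by rw [hb, he]
    _ = (a-c)^2 := by ring
  rw [hiden]
  exact pow_le_pow_left₀ hac0 hac 2

lemma quad2 (ε a c : ℝ) (h1 : 1 < a*c) (ha0 : 0 < a) (hkey : 0 ≤ -a^2 + ε*a + 1) :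
    a - c ≤ ε := by nlinarith

set_option maxHeartbeats 1000000 in
lemma geo_point (ε : ℝ) (hε : 0 < ε) (s x y : ℝ)
    (hs1 : (ε + Real.sqrt (1+ε^2))⁻¹ ≤ s) (hs2 : s ≤ ε + Real.sqrt (1+ε^2))
    (hxy : x^2 + y^2 = s^2) :
    ∃ t : ℝ, t ∈ Set.Icc (-1:ℝ) 1 ∧
      (x*(s^2+1)/(2*s^2) - t)^2 + (y*(s^2-1)/(2*s^2))^2 ≤ ε^2 := by
  have hσ0 : (0:ℝ) ≤ 1 + ε^2 := by positivity
  set σ := Real.sqrt (1+ε^2) with hσdef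
  have hσ2 : σ^2 = 1 + ε^2 := Real.sq_sqrt hσ0
  have hσnn : 0 ≤ σ := Real.sqrt_nonneg _
  have hσ1 : 1 ≤ σ := by nlinarith
  have hσε : ε < σ := by nlinarith
  have hρ0 : (0:ℝ) < ε + σ := by linarith
  have hinv : (ε + σ)⁻¹ = σ - ε := by
    refine inv_eq_of_mul_eq_one_right ?_
    nlinarith
  have hs1' : σ - ε ≤ s := hinv ▸ hs1
  have hs0 : 0 < s := lt_of_lt_of_le (by linarith) hs1'
  have hw0 : 0 < s⁻¹ := by positivity
  set w := s⁻¹ with hwdef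
  have hw : s * w = 1 := mul_inv_cancel₀ hs0.ne'
  have hs2w : s^2 * w = s := by rw [hwdef]; field_simp
  have hσsw : 2*σ*s*w = 2*σ := by
    calc 2*σ*s*w = 2*σ*(s*w) := by ring
    _ = 2*σ := by rw [hw, mul_one]
  set a := (s + w)/2 with hadef
  set b := (s - w)/2 with hbdef
  have hab : a^2 - b^2 = 1 := by
    have h : a^2 - b^2 = s * w := by rw [hadef, hbdef]; ring
    rw [h, hw]
  have hC : s^2 + 1 ≤ 2*σ*s := by nlinarith [mul_nonneg (sub_nonneg.2 hs1') (sub_nonneg.2 hs2)]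
  have haσ : a ≤ σ := by
    have h := mul_le_mul_of_nonneg_right hC hw0.le
    rw [hadef]
    nlinarith [h, hs2w, hσsw, hw]
  have ha1 : 1 ≤ a := by
    rw [hadef]
    nlinarith [mul_nonneg (sq_nonneg (s-1)) hw0.le, hw, hs2w]
  have ha0 : 0 < a := by linarith
  have hb2 : b^2 ≤ ε^2 := by
    nlinarith [hab, mul_nonneg (sub_nonneg.2 haσ) (by linarith : (0:ℝ) ≤ σ + a)]
  set c := x * w with hcdef
  set e := y * w with hedef
  have hcd : c^2 + e^2 = 1 := by
    have h : c^2 + e^2 = (x^2 + y^2) * w^2 := by rw [hcdef, hedef]; ring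
    rw [h, hxy]
    calc s^2 * w^2 = (s*w)^2 := by ring
    _ = 1 := by rw [hw]; norm_num
  have hX : x*(s^2+1)/(2*s^2) = a * c := by
    rw [hadef, hcdef, hwdef]
    field_simp
  have hY : y*(s^2-1)/(2*s^2) = b * e := by
    rw [hbdef, hedef, hwdef]
    field_simp
  rw [hX, hY]
  have hkey : 0 ≤ -a^2 + ε*a + 1 := by
    nlinarith [mul_nonneg (sub_nonneg.2 ha1) (sub_nonneg.2 haσ),
      mul_nonneg (sub_nonneg.2 haσ) (by linarith : (0:ℝ) ≤ σ - ε),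
      mul_nonneg hε.le (by linarith : (0:ℝ) ≤ σ - ε)]
  have hc1 : c^2 ≤ 1 := by linarith [sq_nonneg e, hcd]
  rcases le_or_gt (a*c) 1 with h1 | h1
  · rcases le_or_gt (-1 : ℝ) (a*c) with h2 | h2
    · refine ⟨a*c, ⟨h2, h1⟩, ?_⟩
      have he2 : e^2 ≤ 1 := by linarith [sq_nonneg c]
      have hq := quad0 ε b e hb2 he2
      calc (a*c - a*c)^2 + (b*e)^2 = (b*e)^2 := by ring
      _ ≤ ε^2 := hq
    · refine ⟨-1, ⟨le_refl _, by norm_num⟩, ?_⟩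
      have hcge : -1 ≤ c := by linarith [sq_nonneg (c+1), hc1]
      have hac : a - (-c) ≤ ε := quad2 ε a (-c) (by nlinarith [h2]) ha0 hkey
      have hac0 : 0 ≤ a - (-c) := by linarith
      have hq := quad1 ε a b (-c) e hab (by nlinarith [hcd]) hac hac0
      calc (a*c - (-1))^2 + (b*e)^2 = (a*(-c) - 1)^2 + (b*e)^2 := by ring
      _ ≤ ε^2 := hq
  · refine ⟨1, ⟨by norm_num, le_refl _⟩, ?_⟩
    have hcle : c ≤ 1 := by linarith [sq_nonneg (c-1), hc1]
    have hac : a - c ≤ ε := quad2 ε a c h1 ha0 hkey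
    have hac0 : 0 ≤ a - c := by linarith
    exact quad1 ε a b c e hab hcd hac hac0
lemma annulus_eq' {B : Type*} [NormedAddCommGroup B] [NormedSpace ℂ B] [CompleteSpace B]
    (f : ℂ → B) {V : Set ℂ} (hV : IsOpen V) (hf : DifferentiableOn ℂ f V)
    {r R : ℝ} (h0 : 0 < r) (hle : r ≤ R)
    (hA : closedBall (0:ℂ) R \ ball 0 r ⊆ V) :
    (∮ z in C((0:ℂ), R), f z) = ∮ z in C((0:ℂ), r), f z := by
  refine circleIntegral_eq_of_differentiable_on_annulus_off_countable h0 hle Set.countable_empty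
    (hf.continuousOn.mono hA) (fun z hz => ?_)
  exact hf.differentiableAt (hV.mem_nhds (hA ⟨ball_subset_closedBall hz.1.1,
    fun h => hz.1.2 (ball_subset_closedBall h)⟩))

lemma annulus_cauchy {B : Type*} [NormedAddCommGroup B] [NormedSpace ℂ B] [CompleteSpace B]
    (f : ℂ → B) {V : Set ℂ} (hV : IsOpen V) (hf : DifferentiableOn ℂ f V)
    {r R : ℝ} (h0 : 0 < r) (hle : r ≤ R)
    (hA : closedBall (0:ℂ) R \ ball 0 r ⊆ V)
    {u : ℂ} (hur : r < ‖u‖) (huR : ‖u‖ < R) :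
    (∮ z in C((0:ℂ), R), (z - u)⁻¹ • f z) - (∮ z in C((0:ℂ), r), (z - u)⁻¹ • f z)
      = (2 * Real.pi * Complex.I) • f u := by
  have h0R : (0:ℝ) < R := h0.trans_le hle
  have huV : u ∈ V := hA ⟨by simpa [Complex.dist_eq] using huR.le,
    by simp [Complex.dist_eq]; exact hur.le⟩
  set g : ℂ → B := dslope f u with hg
  have hgd : DifferentiableOn ℂ g V :=
    (Complex.differentiableOn_dslope (hV.mem_nhds huV)).mpr hf
  -- sphere points differ from u
  have hsR : ∀ z ∈ sphere (0:ℂ) R, z ≠ u := fun z hz => by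
    intro h; rw [mem_sphere_iff_norm, sub_zero, h] at hz
    exact (ne_of_lt huR) (by simpa using hz)
  have hsr : ∀ z ∈ sphere (0:ℂ) r, z ≠ u := fun z hz => by
    intro h; rw [mem_sphere_iff_norm, sub_zero, h] at hz
    exact (ne_of_gt hur) (by simpa using hz)
  -- continuity of f on spheres
  have hsubR : sphere (0:ℂ) R ⊆ V := fun z hz => hA ⟨sphere_subset_closedBall hz,
    by simp only [mem_sphere_iff_norm, sub_zero] at hz; simp [mem_ball, Complex.dist_eq, hz]; linarith⟩
  have hsubr : sphere (0:ℂ) r ⊆ V := fun z hz => hA ⟨by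
      simp only [mem_sphere_iff_norm, sub_zero] at hz
      simp [mem_closedBall, Complex.dist_eq, hz]; linarith,
    by simp only [mem_sphere_iff_norm, sub_zero] at hz
       simp [mem_ball, Complex.dist_eq, hz]⟩
  have key : ∀ (ρ : ℝ), 0 < ρ → sphere (0:ℂ) ρ ⊆ V → (∀ z ∈ sphere (0:ℂ) ρ, z ≠ u) →
      (∮ z in C((0:ℂ), ρ), g z)
        = (∮ z in C((0:ℂ), ρ), (z - u)⁻¹ • f z) - (∮ z in C((0:ℂ), ρ), (z - u)⁻¹) • f u := by
    intro ρ hρ hsub hne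
    have hfc : ContinuousOn f (sphere (0:ℂ) ρ) := (hf.continuousOn).mono hsub
    have h1 : CircleIntegrable (fun z => (z - u)⁻¹ • f z) 0 ρ := by
      refine ContinuousOn.circleIntegrable hρ.le ?_
      exact (ContinuousOn.inv₀ (by fun_prop) (fun z hz => sub_ne_zero.mpr (hne z hz))).smul hfc
    have h2 : CircleIntegrable (fun z => (z - u)⁻¹ • f u) 0 ρ := by
      refine ContinuousOn.circleIntegrable hρ.le ?_
      exact (ContinuousOn.inv₀ (by fun_prop) (fun z hz => sub_ne_zero.mpr (hne z hz))).smul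
        continuousOn_const
    have congr1 : (∮ z in C((0:ℂ), ρ), g z)
        = ∮ z in C((0:ℂ), ρ), ((z - u)⁻¹ • f z - (z - u)⁻¹ • f u) := by
      refine circleIntegral.integral_congr hρ.le (fun z hz => ?_)
      rw [hg, dslope_of_ne f (hne z hz), slope_def_module]
      rw [smul_sub]
    rw [congr1, circleIntegral.integral_sub h1 h2, circleIntegral.integral_smul_const]
  have hR := key R h0R hsubR hsR
  have hr := key r h0 hsubr hsr
  have hann : (∮ z in C((0:ℂ), R), g z) = ∮ z in C((0:ℂ), r), g z :=
    annulus_eq' g hV hgd h0 hle hA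
  have hiR : (∮ z in C((0:ℂ), R), (z - u)⁻¹) = 2 * Real.pi * Complex.I := by
    refine circleIntegral.integral_sub_inv_of_mem_ball ?_
    simpa [mem_ball, Complex.dist_eq] using huR
  have hir : (∮ z in C((0:ℂ), r), (z - u)⁻¹) = 0 := by
    refine circleIntegral_eq_zero_of_differentiable_on_off_countable h0.le Set.countable_empty
      ?_ (fun z hz => ?_)
    · refine ContinuousOn.inv₀ (by fun_prop) (fun z hz => sub_ne_zero.mpr ?_)
      intro h; rw [h] at hz
      simp only [mem_closedBall, Complex.dist_eq, sub_zero] at hz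
      exact absurd hz (not_le.mpr hur)
    · refine DifferentiableAt.inv (by fun_prop) (sub_ne_zero.mpr ?_)
      intro h; rw [h] at hz
      simp only [mem_diff, mem_ball, Complex.dist_eq, sub_zero] at hz
      exact absurd hz.1 (not_lt.mpr hur.le)
  rw [hR, hr, hiR, hir, zero_smul, sub_zero] at hann
  rw [← hann]
  abel

lemma natDegree_T_le : ∀ k : ℕ, (Polynomial.Chebyshev.T ℂ (k:ℤ)).natDegree ≤ k
  | 0 => by simp
  | 1 => by simp
  | (k+2) => by
    have h1 := natDegree_T_le (k+1)
    have h2 := natDegree_T_le k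
    have hcast : ((k+2 : ℕ) : ℤ) = (k : ℤ) + 2 := by push_cast; ring
    rw [hcast, Polynomial.Chebyshev.T_add_two]
    refine le_trans (Polynomial.natDegree_sub_le _ _) (max_le ?_ ?_)
    · refine le_trans (Polynomial.natDegree_mul_le) ?_
      have h3 : ((2 * Polynomial.X : Polynomial ℂ)).natDegree ≤ 1 := by
        refine le_trans (Polynomial.natDegree_mul_le) ?_
        simp
      have hc : ((k:ℤ) + 1) = ((k+1 : ℕ) : ℤ) := by push_cast; ring
      rw [hc]
      omega
    · omega

lemma cheb_eval (θ : ℝ) (k : ℕ) :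
    Complex.exp (θ * Complex.I) ^ k + (Complex.exp (θ * Complex.I))⁻¹ ^ k
      = 2 * (Polynomial.Chebyshev.T ℂ (k:ℤ)).eval (Complex.cos θ) := by
  rw [Polynomial.Chebyshev.T_complex_cos]
  rw [← Complex.exp_nat_mul, ← Complex.exp_neg, ← Complex.exp_nat_mul]
  rw [Complex.cos]
  push_cast
  ring_nf

set_option maxHeartbeats 2000000 in
/-- Lemma 4.6 (Babuška et al.): given a compact interval `L = [a₀, b₀] ⊂ ℝ ⊂ ℂ` of
positive length, `d > 0`, the region `Ξ(L; d) = {z : dist(z, L) ≤ d}` and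
`ϱ = 2d/|L| + √(1 + 4d²/|L|²) > 1`, any `B`-valued function `v` analytic on an open set
containing `Ξ(L; d)` can be approximated on `L` by polynomials of degree `p` with
coefficients in `B` at the exponential rate `(2/(ϱ-1)) ϱ^{-p} max_{Ξ(L;d)} ‖v‖`. -/
theorem stmt8 {B : Type*} [NormedAddCommGroup B] [NormedSpace ℂ B] [CompleteSpace B]
    (a₀ b₀ : ℝ) (hab : a₀ < b₀) (d : ℝ) (hd : 0 < d)
    (L : Set ℂ) (hL : L = (fun t : ℝ => (t : ℂ)) '' Set.Icc a₀ b₀)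
    (Ξ : Set ℂ) (hΞ : Ξ = {z : ℂ | Metric.infDist z L ≤ d})
    (ϱ : ℝ) (hϱ : ϱ = 2 * d / (b₀ - a₀) + Real.sqrt (1 + 4 * d ^ 2 / (b₀ - a₀) ^ 2))
    (v : ℂ → B) (hv : ∃ U : Set ℂ, IsOpen U ∧ Ξ ⊆ U ∧ AnalyticOnNhd ℂ v U) :
    ∀ p : ℕ, ∃ coef : ℕ → B,
      ∀ y ∈ Set.Icc a₀ b₀,
        ‖v (y : ℂ) - ∑ s ∈ Finset.range (p + 1), ((y : ℂ) ^ s • coef s)‖ ≤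
          (2 / (ϱ - 1)) * ϱ ^ (-(p : ℤ)) * sSup ((fun z => ‖v z‖) '' Ξ) := by
  intro p
  obtain ⟨U, hUo, hΞU, hva⟩ := hv
  set rr : ℝ := (b₀ - a₀)/2 with hrr
  have hr0 : 0 < rr := by rw [hrr]; linarith
  set cc : ℝ := (a₀ + b₀)/2 with hcc
  set ε : ℝ := d / rr with hεdef
  have hε : 0 < ε := by positivity
  have hϱε : ϱ = ε + Real.sqrt (1 + ε^2) := by
    rw [hϱ, hεdef, hrr]
    have e1 : 2 * d / (b₀ - a₀) = d / ((b₀ - a₀)/2) := by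
      field_simp
    have e2 : 4 * d ^ 2 / (b₀ - a₀) ^ 2 = (d / ((b₀ - a₀)/2))^2 := by
      field_simp
      ring
    rw [e1, e2]
  have hσ2 : (Real.sqrt (1+ε^2))^2 = 1+ε^2 := Real.sq_sqrt (by positivity)
  have hσ1 : 1 ≤ Real.sqrt (1+ε^2) := by nlinarith [Real.sqrt_nonneg (1+ε^2)]
  have hϱ1 : 1 < ϱ := by rw [hϱε]; linarith
  have hϱ0 : (0:ℝ) < ϱ := by linarith
  have hϱinv0 : (0:ℝ) < ϱ⁻¹ := by positivity
  have hϱinv1 : ϱ⁻¹ < 1 := by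
    rw [inv_lt_one_iff₀]
    right; exact hϱ1
  have hϱltinv : ϱ⁻¹ ≤ ϱ := by linarith
  -- L, Ξ facts
  have hLsub : ∀ t : ℝ, a₀ ≤ t → t ≤ b₀ → (t:ℂ) ∈ L := by
    intro t h1 h2; rw [hL]; exact ⟨t, ⟨h1, h2⟩, rfl⟩
  have hLcompact : IsCompact L := by
    rw [hL]; exact (isCompact_Icc).image Complex.continuous_ofReal
  have hLne : L.Nonempty := ⟨(a₀ : ℂ), hLsub a₀ le_rfl hab.le⟩
  have hΞclosed : IsClosed Ξ := by
    rw [hΞ]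
    exact isClosed_le (continuous_infDist_pt L) continuous_const
  have hΞsub : Ξ ⊆ Metric.closedBall (0:ℂ) (|a₀| + |b₀| + d) := by
    intro z hz
    rw [hΞ] at hz
    obtain ⟨x, hxL, hdx⟩ := hLcompact.exists_infDist_eq_dist hLne z
    rw [hL] at hxL
    obtain ⟨t, ht, rfl⟩ := hxL
    have h1 : dist z ((t:ℝ):ℂ) ≤ d := by rw [← hdx]; exact hz
    have h2 : ‖((t:ℝ):ℂ)‖ ≤ |a₀| + |b₀| := by
      rw [Complex.norm_real, Real.norm_eq_abs]
      rcases abs_cases t with ⟨h, _⟩ | ⟨h, _⟩ <;> rcases abs_cases a₀ with ⟨ha, _⟩ | ⟨ha, _⟩ <;>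
        rcases abs_cases b₀ with ⟨hb, _⟩ | ⟨hb, _⟩ <;>
        simp only [h, ha, hb] <;> cases' ht with ht1 ht2 <;> linarith
    rw [Metric.mem_closedBall, dist_zero_right]
    calc ‖z‖ ≤ ‖z - ((t:ℝ):ℂ)‖ + ‖((t:ℝ):ℂ)‖ := by
          simpa using norm_add_le (z - ((t:ℝ):ℂ)) ((t:ℝ):ℂ)
    _ ≤ d + (|a₀| + |b₀|) := by
        refine add_le_add ?_ (by simpa using h2)
        rw [← Complex.dist_eq]; exact h1
    _ = |a₀| + |b₀| + d := by ring
  have hΞcomp : IsCompact Ξ := (isCompact_closedBall (0:ℂ) _).of_isClosed_subset hΞclosed hΞsub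
  set M := sSup ((fun z => ‖v z‖) '' Ξ) with hMdef
  have hvc : ContinuousOn v Ξ := (hva.continuousOn).mono hΞU
  have hbdd : BddAbove ((fun z => ‖v z‖) '' Ξ) :=
    (hΞcomp.image_of_continuousOn (continuous_norm.comp_continuousOn hvc)).bddAbove
  have hMle : ∀ z ∈ Ξ, ‖v z‖ ≤ M := fun z hz => le_csSup hbdd ⟨z, hz, rfl⟩
  -- the composed map
  set J : ℂ → ℂ := fun w => (↑cc + ↑rr * ((w + w⁻¹)/2)) with hJdef
  set V : Set ℂ := {w : ℂ | w ≠ 0} ∩ J ⁻¹' U with hVdef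
  have hJc : ContinuousOn J {w : ℂ | w ≠ 0} := by
    apply ContinuousOn.add continuousOn_const
    apply ContinuousOn.mul continuousOn_const
    apply ContinuousOn.div_const
    exact continuousOn_id.add (ContinuousOn.inv₀ continuousOn_id fun x hx => hx)
  have hVo : IsOpen V := hJc.isOpen_inter_preimage isOpen_ne hUo
  have hJd : DifferentiableOn ℂ J {w : ℂ | w ≠ 0} := by
    apply DifferentiableOn.add (differentiableOn_const _)
    apply DifferentiableOn.mul (differentiableOn_const _)
    apply DifferentiableOn.div_const
    exact differentiableOn_id.add (DifferentiableOn.inv differentiableOn_id fun x hx => hx)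
  set F : ℂ → B := fun w => v (J w) with hFdef
  have hFd : DifferentiableOn ℂ F V := by
    refine DifferentiableOn.comp (hva.differentiableOn) (hJd.mono (fun w hw => hw.1))
      (fun w hw => hw.2)
  -- geometric containment
  have hJΞ : ∀ w : ℂ, ϱ⁻¹ ≤ ‖w‖ → ‖w‖ ≤ ϱ → J w ∈ Ξ := by
    intro w habs2 habs1
    have hw0 : w ≠ 0 := by
      intro h; rw [h] at habs2; simp at habs2; linarith
    have hxy : (w.re)^2 + (w.im)^2 = (‖w‖)^2 := by
      rw [Complex.sq_norm, Complex.normSq_apply]; ring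
    obtain ⟨t, ht, hle⟩ := geo_point ε hε (‖w‖) w.re w.im
      (by rw [← hϱε]; exact habs2) (by rw [← hϱε]; exact habs1) hxy
    rw [hΞ]
    have hmem : ((cc + rr * t : ℝ) : ℂ) ∈ L := by
      refine hLsub _ ?_ ?_ <;> rw [hcc, hrr] <;> nlinarith [ht.1, ht.2, hr0]
    refine le_trans (Metric.infDist_le_dist_of_mem hmem) ?_
    rw [Complex.dist_eq]
    have hsplit : J w - ((cc + rr * t : ℝ) : ℂ) = ↑rr * ((w + w⁻¹)/2 - ↑t) := by
      rw [hJdef]; push_cast; ring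
    rw [hsplit, norm_mul, Complex.norm_real, Real.norm_eq_abs, abs_of_pos hr0]
    have hnsq : Complex.normSq w = (‖w‖)^2 := by
      rw [Complex.sq_norm]
    have hns0 : Complex.normSq w ≠ 0 := fun h => hw0 (Complex.normSq_eq_zero.mp h)
    have habs0 : ‖w‖ ≠ 0 := fun h => hw0 (norm_eq_zero.mp h)
    have hnsq' : ∀ z : ℂ, Complex.normSq z = z.re^2 + z.im^2 := by
      intro z; rw [Complex.normSq_apply]; ring
    have habssq : (‖(w + w⁻¹)/2 - (↑t:ℂ)‖)^2 ≤ ε^2 := by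
      rw [Complex.sq_norm, hnsq']
      have hre : ((w + w⁻¹)/2 - (↑t:ℂ)).re
          = w.re*((‖w‖)^2+1)/(2*(‖w‖)^2) - t := by
        simp only [Complex.sub_re, Complex.div_ofNat_re, Complex.add_re, Complex.inv_re,
          Complex.ofReal_re, hnsq]
        congr 1
        field_simp
      have him : ((w + w⁻¹)/2 - (↑t:ℂ)).im
          = w.im*((‖w‖)^2-1)/(2*(‖w‖)^2) := by
        simp only [Complex.sub_im, Complex.div_ofNat_im, Complex.add_im, Complex.inv_im,
          Complex.ofReal_im, hnsq, sub_zero]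
        field_simp
        ring
      rw [hre, him]
      exact hle
    have habsle : ‖(w + w⁻¹)/2 - (↑t:ℂ)‖ ≤ ε := by
      nlinarith [habssq, norm_nonneg ((w + w⁻¹)/2 - (↑t:ℂ)), hε]
    calc rr * ‖(w + w⁻¹)/2 - (↑t:ℂ)‖ ≤ rr * ε :=
          mul_le_mul_of_nonneg_left habsle hr0.le
    _ = d := by rw [hεdef]; field_simp
  have hAnn : Metric.closedBall (0:ℂ) ϱ \ Metric.ball (0:ℂ) ϱ⁻¹ ⊆ V := by
    intro w hw
    have habs1 : ‖w‖ ≤ ϱ := by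
      simpa [Complex.dist_eq] using hw.1
    have habs2 : ϱ⁻¹ ≤ ‖w‖ := by
      by_contra h
      exact hw.2 (by simpa [Metric.mem_ball, Complex.dist_eq] using not_le.mp h)
    have hw0 : w ≠ 0 := by
      intro h; rw [h] at habs2; simp at habs2; linarith
    exact ⟨hw0, hΞU (hJΞ w habs2 habs1)⟩
  have hsphR : sphere (0:ℂ) ϱ ⊆ Metric.closedBall (0:ℂ) ϱ \ Metric.ball (0:ℂ) ϱ⁻¹ := by
    intro z hz
    rw [mem_sphere_iff_norm, sub_zero] at hz
    constructor
    · rw [Metric.mem_closedBall, dist_zero_right, hz]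
    · rw [Metric.mem_ball, dist_zero_right, hz]
      exact not_lt.mpr (by linarith)
  have hsphr : sphere (0:ℂ) ϱ⁻¹ ⊆ Metric.closedBall (0:ℂ) ϱ \ Metric.ball (0:ℂ) ϱ⁻¹ := by
    intro z hz
    rw [mem_sphere_iff_norm, sub_zero] at hz
    constructor
    · rw [Metric.mem_closedBall, dist_zero_right, hz]; linarith
    · rw [Metric.mem_ball, dist_zero_right, hz]
      exact not_lt.mpr le_rfl
  have hFc : ContinuousOn F (sphere (0:ℂ) ϱ) :=
    (hFd.continuousOn).mono (Set.Subset.trans hsphR hAnn)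
  have hFci : ContinuousOn F (sphere (0:ℂ) ϱ⁻¹) :=
    (hFd.continuousOn).mono (Set.Subset.trans hsphr hAnn)
  have hMFo : ∀ z ∈ sphere (0:ℂ) ϱ, ‖F z‖ ≤ M := by
    intro z hz
    rw [mem_sphere_iff_norm, sub_zero] at hz
    refine hMle _ (hJΞ z ?_ ?_) <;>
      (rw [show ‖z‖ = ‖z‖ from rfl, hz]; try linarith)
  have hMFi : ∀ z ∈ sphere (0:ℂ) ϱ⁻¹, ‖F z‖ ≤ M := by
    intro z hz
    rw [mem_sphere_iff_norm, sub_zero] at hz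
    refine hMle _ (hJΞ z ?_ ?_) <;>
      (rw [show ‖z‖ = ‖z‖ from rfl, hz]; try linarith)
  set eo : ℕ → B := fun k => ∮ z in C((0:ℂ), ϱ), z⁻¹^(k+1) • F z with heo
  set ea : ℕ → B := fun k => ∮ z in C((0:ℂ), ϱ), z^k • F z with hea
  have hann : ∀ k : ℕ, (∮ z in C((0:ℂ), ϱ⁻¹), z^k • F z) = ea k := by
    intro k
    refine (annulus_eq' (fun z => z^k • F z) hVo ?_ hϱinv0 hϱltinv hAnn).symm
    exact DifferentiableOn.smul ((differentiable_pow k).differentiableOn) hFd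
  have hM0 : 0 ≤ M := le_trans (norm_nonneg _) (hMle (a₀:ℂ) (by
    rw [hΞ]
    refine le_trans (Metric.infDist_le_dist_of_mem (hLsub a₀ le_rfl hab.le)) (by simp [hd.le])))
  have main : ∀ u : ℂ, ‖u‖ = 1 →
      ‖(2 * Real.pi * Complex.I) • F u - ((∑ k ∈ Finset.range (p+1), u^k • eo k)
          + ∑ k ∈ Finset.range p, (u⁻¹)^(k+1) • ea k)‖
        ≤ 4 * Real.pi * (ϱ - 1)⁻¹ * M * (ϱ⁻¹)^p := by
    intro u hu
    have h1 : ϱ⁻¹ < ‖u‖ := by rw [hu]; exact hϱinv1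
    have h2 : ‖u‖ < ϱ := by rw [hu]; exact hϱ1
    have hcau := annulus_cauchy F hVo hFd hϱinv0 hϱltinv hAnn h1 h2
    have hout := expand_outer F hϱ0 hFc hMFo h2 (p+1)
    have hin := expand_inner F hϱinv0 hFci hMFi h1 p
    rw [hu] at hout hin
    simp only [hann] at hin
    have hsplit : (2 * Real.pi * Complex.I) • F u - ((∑ k ∈ Finset.range (p+1), u^k • eo k)
          + ∑ k ∈ Finset.range p, (u⁻¹)^(k+1) • ea k)
        = ((∮ z in C((0:ℂ), ϱ), (z - u)⁻¹ • F z)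
              - ∑ k ∈ Finset.range (p+1), u ^ k • (∮ z in C((0:ℂ), ϱ), z⁻¹ ^ (k+1) • F z))
          - ((∮ z in C((0:ℂ), ϱ⁻¹), (z - u)⁻¹ • F z)
              + ∑ k ∈ Finset.range p, (u⁻¹) ^ (k+1) • ea k) := by
      rw [← hcau, heo]
      abel
    rw [hsplit]
    refine le_trans (norm_sub_le _ _) ?_
    have hpow : ϱ * (ϱ⁻¹)^(p+1) = (ϱ⁻¹)^p := by
      rw [pow_succ' ϱ⁻¹ p, ← mul_assoc, mul_inv_cancel₀ hϱ0.ne', one_mul]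
    have h1ϱ : (0:ℝ) < 1 - ϱ⁻¹ := by linarith
    have hinv2 : ϱ⁻¹ * (1 - ϱ⁻¹)⁻¹ = (ϱ - 1)⁻¹ := by
      rw [show (1 - ϱ⁻¹) = (ϱ - 1) * ϱ⁻¹ by field_simp, mul_inv, inv_inv]
      field_simp
    have e1 : 2 * Real.pi * ϱ * ((1 / ϱ) ^ (p+1) * (ϱ - 1)⁻¹ * M)
        = 2 * Real.pi * (ϱ - 1)⁻¹ * M * (ϱ⁻¹)^p := by
      rw [one_div]
      calc 2 * Real.pi * ϱ * ((ϱ⁻¹) ^ (p+1) * (ϱ - 1)⁻¹ * M)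
          = 2 * Real.pi * ((ϱ * (ϱ⁻¹)^(p+1)) * ((ϱ - 1)⁻¹ * M)) := by ring
      _ = 2 * Real.pi * (ϱ - 1)⁻¹ * M * (ϱ⁻¹)^p := by rw [hpow]; ring
    have e2 : 2 * Real.pi * ϱ⁻¹ * ((ϱ⁻¹ / 1) ^ p * (1 - ϱ⁻¹)⁻¹ * M)
        = 2 * Real.pi * (ϱ - 1)⁻¹ * M * (ϱ⁻¹)^p := by
      rw [div_one]
      calc 2 * Real.pi * ϱ⁻¹ * ((ϱ⁻¹) ^ p * (1 - ϱ⁻¹)⁻¹ * M)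
          = 2 * Real.pi * ((ϱ⁻¹ * (1 - ϱ⁻¹)⁻¹) * M * (ϱ⁻¹)^p) := by ring
      _ = _ := by rw [hinv2]; ring
    rw [e1] at hout
    rw [e2] at hin
    calc ‖_‖ + ‖_‖ ≤ 2 * Real.pi * (ϱ - 1)⁻¹ * M * (ϱ⁻¹)^p
          + 2 * Real.pi * (ϱ - 1)⁻¹ * M * (ϱ⁻¹)^p := add_le_add hout hin
    _ = 4 * Real.pi * (ϱ - 1)⁻¹ * M * (ϱ⁻¹)^p := by ring
  -- Chebyshev polynomials composed with the affine map
  set Pk : ℕ → Polynomial ℂ := fun k => (Polynomial.Chebyshev.T ℂ (k:ℤ)).comp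
    (Polynomial.C (((rr:ℝ):ℂ))⁻¹ * (Polynomial.X - Polynomial.C ((cc:ℝ):ℂ))) with hPk
  have hPkdeg : ∀ k, (Pk k).natDegree ≤ k := by
    intro k
    refine le_trans (Polynomial.natDegree_comp_le) ?_
    have h1 : (Polynomial.C (((rr:ℝ):ℂ))⁻¹
        * (Polynomial.X - Polynomial.C ((cc:ℝ):ℂ))).natDegree ≤ 1 := by
      refine le_trans Polynomial.natDegree_mul_le ?_
      simp [Polynomial.natDegree_X_sub_C]
    calc (Polynomial.Chebyshev.T ℂ (k:ℤ)).natDegree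
          * (Polynomial.C (((rr:ℝ):ℂ))⁻¹
              * (Polynomial.X - Polynomial.C ((cc:ℝ):ℂ))).natDegree ≤ k * 1 :=
        Nat.mul_le_mul (natDegree_T_le k) h1
    _ = k := mul_one k
  refine ⟨fun s => (4 * (Real.pi:ℂ) * Complex.I)⁻¹ •
    ((∑ k ∈ Finset.range (p+1), (2 * (Pk k).coeff s) • eo k)
      + ∑ k ∈ Finset.range p, (2 * (Pk (k+1)).coeff s) • ea k), ?_⟩
  intro y hy
  have hccrr1 : cc - rr = a₀ := by rw [hcc, hrr]; ring
  have hccrr2 : cc + rr = b₀ := by rw [hcc, hrr]; ring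
  set t₀ : ℝ := (y - cc)/rr with ht₀def
  have ht₀1 : -1 ≤ t₀ := by
    rw [ht₀def, le_div_iff₀ hr0]
    nlinarith [hy.1]
  have ht₀2 : t₀ ≤ 1 := by
    rw [ht₀def, div_le_iff₀ hr0]
    nlinarith [hy.2]
  set θ : ℝ := Real.arccos t₀ with hθdef
  have hcosθ : Real.cos θ = t₀ := Real.cos_arccos ht₀1 ht₀2
  set u : ℂ := Complex.exp ((θ:ℂ) * Complex.I) with hudef
  have huabs : ‖u‖ = 1 := Complex.norm_exp_ofReal_mul_I θ
  have huinvabs : ‖u⁻¹‖ = 1 := by rw [norm_inv, huabs]; norm_num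
  have hcosC : Complex.cos (θ:ℂ) = ((t₀:ℝ):ℂ) := by
    rw [← Complex.ofReal_cos, hcosθ]
  have ht₀y : ((t₀:ℝ):ℂ) = ((rr:ℝ):ℂ)⁻¹ * ((y:ℂ) - ((cc:ℝ):ℂ)) := by
    rw [ht₀def]
    push_cast
    field_simp
  have hTk : ∀ k : ℕ, u^k + (u⁻¹)^k = 2 * (Pk k).eval ((y:ℂ)) := by
    intro k
    have h1 := cheb_eval θ k
    rw [hcosC] at h1
    rw [hudef, h1, hPk]
    congr 1
    rw [Polynomial.eval_comp]
    congr 1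
    rw [Polynomial.eval_mul, Polynomial.eval_C, Polynomial.eval_sub, Polynomial.eval_X,
      Polynomial.eval_C, ht₀y]
  have hsum2 : u + u⁻¹ = 2 * ((t₀:ℝ):ℂ) := by
    have h1 := hTk 1
    simp only [pow_one] at h1
    rw [h1]
    congr 1
    show ((Polynomial.Chebyshev.T ℂ ((1:ℕ):ℤ)).comp (Polynomial.C (((rr:ℝ):ℂ))⁻¹
      * (Polynomial.X - Polynomial.C ((cc:ℝ):ℂ)))).eval ((y:ℂ)) = ((t₀:ℝ):ℂ)
    rw [Nat.cast_one, Polynomial.Chebyshev.T_one, Polynomial.X_comp, Polynomial.eval_mul,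
      Polynomial.eval_C, Polynomial.eval_sub, Polynomial.eval_X, Polynomial.eval_C, ← ht₀y]
  have hyreal : cc + rr * t₀ = y := by rw [ht₀def]; field_simp; ring
  have hFu : F u = v (y:ℂ) := by
    show v (((cc:ℝ):ℂ) + ((rr:ℝ):ℂ) * ((u + u⁻¹)/2)) = v (y:ℂ)
    rw [hsum2, show (2 * ((t₀:ℝ):ℂ))/2 = ((t₀:ℝ):ℂ) by ring,
      ← Complex.ofReal_mul, ← Complex.ofReal_add, hyreal]
  have hFuinv : F u⁻¹ = v (y:ℂ) := by
    show v (((cc:ℝ):ℂ) + ((rr:ℝ):ℂ) * ((u⁻¹ + (u⁻¹)⁻¹)/2)) = v (y:ℂ)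
    rw [inv_inv, add_comm (u⁻¹) u, hsum2, show (2 * ((t₀:ℝ):ℂ))/2 = ((t₀:ℝ):ℂ) by ring,
      ← Complex.ofReal_mul, ← Complex.ofReal_add, hyreal]
  have hbu := main u huabs
  have hbuinv := main u⁻¹ huinvabs
  simp only [inv_inv] at hbuinv
  rw [hFu] at hbu
  rw [hFuinv] at hbuinv
  set W : B := (∑ k ∈ Finset.range (p+1), (2 * (Pk k).eval ((y:ℂ))) • eo k)
      + ∑ k ∈ Finset.range p, (2 * (Pk (k+1)).eval ((y:ℂ))) • ea k with hW
  have hW2 : W = ((∑ k ∈ Finset.range (p+1), u^k • eo k)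
        + ∑ k ∈ Finset.range p, (u⁻¹)^(k+1) • ea k)
      + ((∑ k ∈ Finset.range (p+1), (u⁻¹)^k • eo k)
        + ∑ k ∈ Finset.range p, u^(k+1) • ea k) := by
    rw [hW]
    have c1 : ∀ k ∈ Finset.range (p+1),
        (2 * (Pk k).eval ((y:ℂ))) • eo k = u^k • eo k + (u⁻¹)^k • eo k := by
      intro k _
      rw [← add_smul, ← hTk k]
    have c2 : ∀ k ∈ Finset.range p,
        (2 * (Pk (k+1)).eval ((y:ℂ))) • ea k = (u⁻¹)^(k+1) • ea k + u^(k+1) • ea k := by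
      intro k _
      rw [← add_smul, add_comm ((u⁻¹)^(k+1)) (u^(k+1)), ← hTk (k+1)]
    rw [Finset.sum_congr rfl c1, Finset.sum_congr rfl c2, Finset.sum_add_distrib,
      Finset.sum_add_distrib]
    abel
  have hcomb : ‖(4 * (Real.pi:ℂ) * Complex.I) • v (y:ℂ) - W‖
      ≤ 8 * Real.pi * (ϱ - 1)⁻¹ * M * (ϱ⁻¹)^p := by
    have h4eq : (4 * (Real.pi:ℂ) * Complex.I) • v (y:ℂ)
        = (2 * (Real.pi:ℂ) * Complex.I) • v (y:ℂ)
          + (2 * (Real.pi:ℂ) * Complex.I) • v (y:ℂ) := by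
      rw [← add_smul]
      congr 1
      ring
    have hsplit2 : (4 * (Real.pi:ℂ) * Complex.I) • v (y:ℂ) - W
        = ((2 * (Real.pi:ℂ) * Complex.I) • v (y:ℂ) - ((∑ k ∈ Finset.range (p+1), u^k • eo k)
            + ∑ k ∈ Finset.range p, (u⁻¹)^(k+1) • ea k))
          + ((2 * (Real.pi:ℂ) * Complex.I) • v (y:ℂ)
            - ((∑ k ∈ Finset.range (p+1), (u⁻¹)^k • eo k)
              + ∑ k ∈ Finset.range p, u^(k+1) • ea k)) := by
      rw [hW2, h4eq]
      abel
    rw [hsplit2]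
    refine le_trans (norm_add_le _ _) ?_
    calc ‖_‖ + ‖_‖ ≤ (4 * Real.pi * (ϱ - 1)⁻¹ * M * (ϱ⁻¹)^p)
          + (4 * Real.pi * (ϱ - 1)⁻¹ * M * (ϱ⁻¹)^p) := add_le_add hbu hbuinv
    _ = 8 * Real.pi * (ϱ - 1)⁻¹ * M * (ϱ⁻¹)^p := by ring
  -- coefficient rearrangement
  have heval : ∀ k, k ≤ p →
      (Pk k).eval ((y:ℂ)) = ∑ s ∈ Finset.range (p+1), (Pk k).coeff s * ((y:ℂ))^s := by
    intro k hk
    exact Polynomial.eval_eq_sum_range' (lt_of_le_of_lt (hPkdeg k) (by omega)) _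
  have hswap : (∑ s ∈ Finset.range (p+1), ((y:ℂ))^s •
        ((∑ k ∈ Finset.range (p+1), (2 * (Pk k).coeff s) • eo k)
          + ∑ k ∈ Finset.range p, (2 * (Pk (k+1)).coeff s) • ea k))
      = W := by
    rw [hW]
    simp only [smul_add, Finset.smul_sum, smul_smul]
    rw [Finset.sum_add_distrib]
    congr 1
    · rw [Finset.sum_comm]
      refine Finset.sum_congr rfl (fun k hk => ?_)
      rw [← Finset.sum_smul]
      congr 1
      rw [heval k (by simp at hk; omega), Finset.mul_sum]
      refine Finset.sum_congr rfl (fun s _ => by ring)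
    · rw [Finset.sum_comm]
      refine Finset.sum_congr rfl (fun k hk => ?_)
      rw [← Finset.sum_smul]
      congr 1
      rw [heval (k+1) (by simp at hk; omega), Finset.mul_sum]
      refine Finset.sum_congr rfl (fun s _ => by ring)
  have h4πI : (4 * (Real.pi:ℂ) * Complex.I) ≠ 0 := by
    simp [Real.pi_ne_zero, Complex.I_ne_zero]
  have hSsum : ∑ s ∈ Finset.range (p+1), ((y:ℂ)^s •
        ((4 * (Real.pi:ℂ) * Complex.I)⁻¹ •
          ((∑ k ∈ Finset.range (p+1), (2 * (Pk k).coeff s) • eo k)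
            + ∑ k ∈ Finset.range p, (2 * (Pk (k+1)).coeff s) • ea k)))
      = (4 * (Real.pi:ℂ) * Complex.I)⁻¹ • W := by
    rw [← hswap, Finset.smul_sum]
    refine Finset.sum_congr rfl (fun s _ => ?_)
    rw [smul_comm]
  have hfinal : v (y:ℂ) - ∑ s ∈ Finset.range (p+1), ((y:ℂ)^s •
        ((4 * (Real.pi:ℂ) * Complex.I)⁻¹ •
          ((∑ k ∈ Finset.range (p+1), (2 * (Pk k).coeff s) • eo k)
            + ∑ k ∈ Finset.range p, (2 * (Pk (k+1)).coeff s) • ea k)))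
      = (4 * (Real.pi:ℂ) * Complex.I)⁻¹
          • ((4 * (Real.pi:ℂ) * Complex.I) • v (y:ℂ) - W) := by
    rw [smul_sub, smul_smul, inv_mul_cancel₀ h4πI, one_smul, hSsum]
  rw [hfinal, norm_smul]
  have hnorminv : ‖(4 * (Real.pi:ℂ) * Complex.I)⁻¹‖ = (4 * Real.pi)⁻¹ := by
    have habs4 : ‖4 * (Real.pi:ℂ) * Complex.I‖ = 4 * Real.pi := by
      rw [norm_mul, norm_mul, Complex.norm_I, Complex.norm_real, Real.norm_eq_abs,
        _root_.abs_of_nonneg Real.pi_pos.le]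
      norm_num
    rw [norm_inv, habs4]
  rw [hnorminv]
  calc (4 * Real.pi)⁻¹ * ‖(4 * (Real.pi:ℂ) * Complex.I) • v (y:ℂ) - W‖
      ≤ (4 * Real.pi)⁻¹ * (8 * Real.pi * (ϱ - 1)⁻¹ * M * (ϱ⁻¹)^p) :=
        mul_le_mul_of_nonneg_left hcomb (by positivity)
  _ = 2 * (ϱ - 1)⁻¹ * M * (ϱ⁻¹)^p := by
      rw [inv_mul_eq_div, div_eq_iff (by positivity : (4:ℝ)*Real.pi ≠ 0)]
      ring
  _ = (2 / (ϱ - 1)) * ϱ ^ (-(p:ℤ)) * M := by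
      rw [zpow_neg, zpow_natCast, ← inv_pow]
      ring
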